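/- Suppose U₀₁ ∈ B(H₁,K₀) and U₁₀ ∈ B(H₀,K₁) are invertible operators satisfying U₀₁*∘U₀₁ = (1 + X*∘X)⁻¹ and U₁₀*∘U₁₀ = (1 + X∘X*)⁻¹, that T̃₁ = U₁₀T₀U₁₀⁻¹ and T̃₀ = (U₀₁*)⁻¹T₁U₀₁*, and that T̃₀∘(Y − U₀₁∘X*∘U₁₀⁻¹) = (Y − U₀₁∘X*∘U₁₀⁻¹)∘T̃₁. Then the block operator U := [[U₀₁∘X*, U₀₁],[U₁₀, −U₁₀∘X]] : H₀⊕H₁ → K₀⊕K₁ is unitary and satisfies UT = T̃U; in particular T and T̃ are unitarily equivalent. -/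

import Mathlib

open ContinuousLinearMap

noncomputable def blockOp {H₀ H₁ K₀ K₁ : Type*}
    [NormedAddCommGroup H₀] [InnerProductSpace ℂ H₀]
    [NormedAddCommGroup H₁] [InnerProductSpace ℂ H₁]
    [NormedAddCommGroup K₀] [InnerProductSpace ℂ K₀]
    [NormedAddCommGroup K₁] [InnerProductSpace ℂ K₁]
    (A : H₀ →L[ℂ] K₀) (B : H₁ →L[ℂ] K₀) (C : H₀ →L[ℂ] K₁) (D : H₁ →L[ℂ] K₁) :
    WithLp 2 (H₀ × H₁) →L[ℂ] WithLp 2 (K₀ × K₁) :=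
  (((WithLp.prodContinuousLinearEquiv 2 ℂ K₀ K₁).symm : (K₀ × K₁) →L[ℂ] WithLp 2 (K₀ × K₁)) ∘L
    ((A.coprod B).prod (C.coprod D))) ∘L
    ((WithLp.prodContinuousLinearEquiv 2 ℂ H₀ H₁ : WithLp 2 (H₀ × H₁) →L[ℂ] (H₀ × H₁)))


section helpers

variable {H₀ H₁ K₀ K₁ : Type*}
    [NormedAddCommGroup H₀] [InnerProductSpace ℂ H₀]
    [NormedAddCommGroup H₁] [InnerProductSpace ℂ H₁]
    [NormedAddCommGroup K₀] [InnerProductSpace ℂ K₀]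
    [NormedAddCommGroup K₁] [InnerProductSpace ℂ K₁]

theorem wlp_ext {α β : Type*} {x y : WithLp 2 (α × β)} (h1 : x.fst = y.fst)
    (h2 : x.snd = y.snd) : x = y := WithLp.ofLp_injective 2 (Prod.ext h1 h2)

theorem blockOp_fst (A : H₀ →L[ℂ] K₀) (B : H₁ →L[ℂ] K₀) (C : H₀ →L[ℂ] K₁) (D : H₁ →L[ℂ] K₁)
    (x : WithLp 2 (H₀ × H₁)) : (blockOp A B C D x).fst = A x.fst + B x.snd := rfl

theorem blockOp_snd (A : H₀ →L[ℂ] K₀) (B : H₁ →L[ℂ] K₀) (C : H₀ →L[ℂ] K₁) (D : H₁ →L[ℂ] K₁)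
    (x : WithLp 2 (H₀ × H₁)) : (blockOp A B C D x).snd = C x.fst + D x.snd := rfl

theorem blockOp_adjoint [CompleteSpace H₀] [CompleteSpace H₁] [CompleteSpace K₀] [CompleteSpace K₁]
    (A : H₀ →L[ℂ] K₀) (B : H₁ →L[ℂ] K₀) (C : H₀ →L[ℂ] K₁) (D : H₁ →L[ℂ] K₁) :
    adjoint (blockOp A B C D) = blockOp (adjoint A) (adjoint C) (adjoint B) (adjoint D) := by
  symm
  rw [eq_adjoint_iff]
  intro x y
  show inner ℂ ((adjoint A) x.fst + (adjoint C) x.snd) y.fst + inner ℂ ((adjoint B) x.fst + (adjoint D) x.snd) y.snd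
      = inner ℂ x.fst (A y.fst + B y.snd) + inner ℂ x.snd (C y.fst + D y.snd)
  simp only [inner_add_left, inner_add_right, adjoint_inner_left]
  ring

end helpers

set_option maxHeartbeats 1000000 in
/-- sufficiency: if `U₀₁, U₁₀` are invertible with `U₀₁*U₀₁ = (1+X*X)⁻¹`,
`U₁₀*U₁₀ = (1+XX*)⁻¹`, `T̃₁ = U₁₀T₀U₁₀⁻¹`, `T̃₀ = (U₀₁*)⁻¹T₁U₀₁*` and
`T̃₀(Y - U₀₁X*U₁₀⁻¹) = (Y - U₀₁X*U₁₀⁻¹)T̃₁`, then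
`U = [[U₀₁X*, U₀₁],[U₁₀, -U₁₀X]]` is unitary and `UT = T̃U`. -/
theorem stmt3 {H₀ H₁ K₀ K₁ : Type*}
    [NormedAddCommGroup H₀] [InnerProductSpace ℂ H₀] [CompleteSpace H₀]
    [NormedAddCommGroup H₁] [InnerProductSpace ℂ H₁] [CompleteSpace H₁]
    [NormedAddCommGroup K₀] [InnerProductSpace ℂ K₀] [CompleteSpace K₀]
    [NormedAddCommGroup K₁] [InnerProductSpace ℂ K₁] [CompleteSpace K₁]
    (T₀ : H₀ →L[ℂ] H₀) (T₁ : H₁ →L[ℂ] H₁) (X : H₁ →L[ℂ] H₀)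
    (T' : K₀ →L[ℂ] K₀) (T'' : K₁ →L[ℂ] K₁) (Y : K₁ →L[ℂ] K₀)
    (U₀₁ : H₁ →L[ℂ] K₀) (U₁₀ : H₀ →L[ℂ] K₁)
    (V₀₁ : K₀ →L[ℂ] H₁) (V₁₀ : K₁ →L[ℂ] H₀)
    (hV₀₁ : U₀₁ ∘L V₀₁ = 1 ∧ V₀₁ ∘L U₀₁ = 1)
    (hV₁₀ : U₁₀ ∘L V₁₀ = 1 ∧ V₁₀ ∘L U₁₀ = 1)
    (h01 : (adjoint U₀₁ ∘L U₀₁) ∘L (1 + adjoint X ∘L X) = 1 ∧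
           (1 + adjoint X ∘L X) ∘L (adjoint U₀₁ ∘L U₀₁) = 1)
    (h10 : (adjoint U₁₀ ∘L U₁₀) ∘L (1 + X ∘L adjoint X) = 1 ∧
           (1 + X ∘L adjoint X) ∘L (adjoint U₁₀ ∘L U₁₀) = 1)
    (hT'' : T'' = U₁₀ ∘L T₀ ∘L V₁₀)
    (hT' : T' = adjoint V₀₁ ∘L T₁ ∘L adjoint U₀₁)
    (hY : T' ∘L (Y - U₀₁ ∘L adjoint X ∘L V₁₀) = (Y - U₀₁ ∘L adjoint X ∘L V₁₀) ∘L T'')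
    (U : WithLp 2 (H₀ × H₁) →L[ℂ] WithLp 2 (K₀ × K₁))
    (hU : U = blockOp (U₀₁ ∘L adjoint X) U₀₁ U₁₀ (-(U₁₀ ∘L X))) :
    adjoint U ∘L U = ContinuousLinearMap.id ℂ _ ∧
    U ∘L adjoint U = ContinuousLinearMap.id ℂ _ ∧
    U ∘L blockOp T₀ (X ∘L T₁ - T₀ ∘L X) 0 T₁
      = blockOp T' (Y ∘L T'' - T' ∘L Y) 0 T'' ∘L U := by
  -- pointwise inverse facts
  have hUV01' : ∀ v, U₀₁ (V₀₁ v) = v := fun v => by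
    simpa using DFunLike.congr_fun hV₀₁.1 v
  have hVU01' : ∀ v, V₀₁ (U₀₁ v) = v := fun v => by
    simpa using DFunLike.congr_fun hV₀₁.2 v
  have hUV10' : ∀ v, U₁₀ (V₁₀ v) = v := fun v => by
    simpa using DFunLike.congr_fun hV₁₀.1 v
  have hVU10' : ∀ v, V₁₀ (U₁₀ v) = v := fun v => by
    simpa using DFunLike.congr_fun hV₁₀.2 v
  have aUV01 : ∀ v, adjoint V₀₁ (adjoint U₀₁ v) = v := fun v => by
    have h : adjoint V₀₁ ∘L adjoint U₀₁ = (1 : K₀ →L[ℂ] K₀) := by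
      rw [← adjoint_comp, hV₀₁.1, one_def, adjoint_id, ← one_def]
    simpa using DFunLike.congr_fun h v
  have aVU01 : ∀ v, adjoint U₀₁ (adjoint V₀₁ v) = v := fun v => by
    have h : adjoint U₀₁ ∘L adjoint V₀₁ = (1 : H₁ →L[ℂ] H₁) := by
      rw [← adjoint_comp, hV₀₁.2, one_def, adjoint_id, ← one_def]
    simpa using DFunLike.congr_fun h v
  have aUV10 : ∀ v, adjoint V₁₀ (adjoint U₁₀ v) = v := fun v => by
    have h : adjoint V₁₀ ∘L adjoint U₁₀ = (1 : K₁ →L[ℂ] K₁) := by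
      rw [← adjoint_comp, hV₁₀.1, one_def, adjoint_id, ← one_def]
    simpa using DFunLike.congr_fun h v
  have aVU10 : ∀ v, adjoint U₁₀ (adjoint V₁₀ v) = v := fun v => by
    have h : adjoint U₁₀ ∘L adjoint V₁₀ = (1 : H₀ →L[ℂ] H₀) := by
      rw [← adjoint_comp, hV₁₀.2, one_def, adjoint_id, ← one_def]
    simpa using DFunLike.congr_fun h v
  -- pointwise Gram facts
  have hPS : ∀ v, adjoint U₀₁ (U₀₁ (v + adjoint X (X v))) = v := fun v => by
    simpa using DFunLike.congr_fun h01.1 v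
  have hSP : ∀ v, adjoint U₀₁ (U₀₁ v) + adjoint X (X (adjoint U₀₁ (U₀₁ v))) = v := fun v => by
    simpa using DFunLike.congr_fun h01.2 v
  have hQR : ∀ v, adjoint U₁₀ (U₁₀ (v + X (adjoint X v))) = v := fun v => by
    simpa using DFunLike.congr_fun h10.1 v
  have hRQ : ∀ v, adjoint U₁₀ (U₁₀ v) + X (adjoint X (adjoint U₁₀ (U₁₀ v))) = v := fun v => by
    simpa using DFunLike.congr_fun h10.2 v
  -- intertwining of the Gram operators
  have hQX' : ∀ u, adjoint U₁₀ (U₁₀ (X u)) = X (adjoint U₀₁ (U₀₁ u)) := fun u => by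
    conv_lhs => rw [← hSP u]
    rw [map_add]
    exact hQR (X (adjoint U₀₁ (U₀₁ u)))
  have hPXs : ∀ u, adjoint U₀₁ (U₀₁ (adjoint X u)) = adjoint X (adjoint U₁₀ (U₁₀ u)) := fun u => by
    conv_lhs => rw [← hRQ u]
    rw [map_add]
    exact hPS (adjoint X (adjoint U₁₀ (U₁₀ u)))
  -- 1 + X†X = V₀₁ V₀₁† and 1 + X X† = V₁₀ V₁₀† (pointwise)
  have h1 : ∀ v, v + adjoint X (X v) = V₀₁ (adjoint V₀₁ v) := fun v => by
    have h' : U₀₁ (v + adjoint X (X v)) = adjoint V₀₁ v := by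
      have h2 := congrArg (⇑(adjoint V₀₁)) (hPS v)
      rw [aUV01] at h2
      exact h2
    calc v + adjoint X (X v) = V₀₁ (U₀₁ (v + adjoint X (X v))) := (hVU01' _).symm
      _ = V₀₁ (adjoint V₀₁ v) := by rw [h']
  have h2 : ∀ v, v + X (adjoint X v) = V₁₀ (adjoint V₁₀ v) := fun v => by
    have h' : U₁₀ (v + X (adjoint X v)) = adjoint V₁₀ v := by
      have h2 := congrArg (⇑(adjoint V₁₀)) (hQR v)
      rw [aUV10] at h2
      exact h2
    calc v + X (adjoint X v) = V₁₀ (U₁₀ (v + X (adjoint X v))) := (hVU10' _).symm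
      _ = V₁₀ (adjoint V₁₀ v) := by rw [h']
  have hUex : ∀ u, U₀₁ (u + adjoint X (X u)) = adjoint V₀₁ u := fun u => by
    rw [h1, hUV01']
  have hf11 : ∀ u, U₀₁ (adjoint X (X (adjoint U₀₁ u))) + U₀₁ (adjoint U₀₁ u) = u := fun u => by
    rw [add_comm, ← map_add, hUex, aUV01]
  have hf22 : ∀ u, U₁₀ (adjoint U₁₀ u) + U₁₀ (X (adjoint X (adjoint U₁₀ u))) = u := fun u => by
    rw [← map_add, h2, hUV10', aUV10]
  -- T'', T' pointwise
  have hT''U : ∀ u, T'' (U₁₀ u) = U₁₀ (T₀ u) := fun u => by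
    rw [hT'']; simp only [comp_apply]; rw [hVU10']
  have hT'V : ∀ u, T' (adjoint V₀₁ u) = adjoint V₀₁ (T₁ u) := fun u => by
    rw [hT']; simp only [comp_apply]; rw [aVU01]
  have k1 : ∀ u, U₀₁ (T₁ u) = adjoint V₀₁ (T₁ u) - U₀₁ (adjoint X (X (T₁ u))) := fun u => by
    have h := hUex (T₁ u)
    rw [map_add] at h
    rw [eq_sub_iff_add_eq]
    exact h
  have k2 : ∀ u, T' (U₀₁ u) = adjoint V₀₁ (T₁ u) - T' (U₀₁ (adjoint X (X u))) := fun u => by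
    rw [eq_sub_iff_add_eq, ← map_add, ← map_add, hUex, hT'V]
  have hga : ∀ u, Y (U₁₀ (T₀ u))
      = T' (Y (U₁₀ u)) + U₀₁ (adjoint X (T₀ u)) - T' (U₀₁ (adjoint X u)) := fun u => by
    have h := DFunLike.congr_fun hY (U₁₀ u)
    simp only [comp_apply, sub_apply, map_sub] at h
    rw [hT''U] at h
    rw [hVU10' u, hVU10' (T₀ u)] at h
    calc Y (U₁₀ (T₀ u))
        = Y (U₁₀ (T₀ u)) - U₀₁ (adjoint X (T₀ u)) + U₀₁ (adjoint X (T₀ u)) := by abel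
      _ = (T' (Y (U₁₀ u)) - T' (U₀₁ (adjoint X u))) + U₀₁ (adjoint X (T₀ u)) := by rw [← h]
      _ = T' (Y (U₁₀ u)) + U₀₁ (adjoint X (T₀ u)) - T' (U₀₁ (adjoint X u)) := by abel
  refine ⟨?_, ?_, ?_⟩
  · rw [hU, blockOp_adjoint]
    ext v
    refine wlp_ext ?_ ?_
    · simp only [comp_apply, blockOp_fst, blockOp_snd, adjoint_comp, adjoint_adjoint, map_neg,
        neg_apply, map_add, coe_id', id_eq]
      rw [hPXs v.fst, hQX' v.snd]
      conv_rhs => rw [← hRQ v.fst]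
      abel
    · simp only [comp_apply, blockOp_fst, blockOp_snd, adjoint_comp, adjoint_adjoint, map_neg,
        neg_apply, map_add, coe_id', id_eq]
      rw [hPXs v.fst, hQX' v.snd]
      conv_rhs => rw [← hSP v.snd]
      abel
  · rw [hU, blockOp_adjoint]
    ext v
    refine wlp_ext ?_ ?_
    · simp only [comp_apply, blockOp_fst, blockOp_snd, adjoint_comp, adjoint_adjoint, map_neg,
        neg_apply, map_add, coe_id', id_eq]
      conv_rhs => rw [← hf11 v.fst]
      abel
    · simp only [comp_apply, blockOp_fst, blockOp_snd, adjoint_comp, adjoint_adjoint, map_neg,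
        neg_apply, map_add, coe_id', id_eq]
      conv_rhs => rw [← hf22 v.snd]
      abel
  · rw [hU]
    ext v
    refine wlp_ext ?_ ?_
    · simp only [comp_apply, blockOp_fst, blockOp_snd, sub_apply, map_sub, map_add, map_neg,
        neg_apply, zero_apply, zero_add, add_zero]
      rw [hT''U v.fst, hT''U (X v.snd), hga v.fst, hga (X v.snd), k1 v.snd, k2 v.snd]
      abel
    · simp only [comp_apply, blockOp_fst, blockOp_snd, sub_apply, map_sub, map_add, map_neg,
        neg_apply, zero_apply, zero_add, add_zero]
      rw [hT''U v.fst, hT''U (X v.snd)]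
      abel
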